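/- Let d be a positive natural number and let F : EuclideanSpace ℝ (Fin d) → ℝ be twice continuously differentiable with the operator norm of its second Fréchet derivative bounded by L ≥ 0 at every point. Let x ∈ EuclideanSpace ℝ (Fin d) and let x̃¹, …, x̃ᵐ (m ≥ 1) satisfy ‖x̃ʲ − x‖ ≤ r for all j. Then for every coordinate i, the decoy-enhanced saliency score Zᵢ = max_j ∂F/∂xᵢ(x̃ʲ) − min_j ∂F/∂xᵢ(x̃ʲ) satisfies 0 ≤ Zᵢ ≤ 2·L·r. -/

import Mathlib

theorem fderiv_lip
    (d : ℕ)
    (F : EuclideanSpace ℝ (Fin d) → ℝ) (L : ℝ)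
    (hF : ContDiff ℝ 2 F)
    (hL2 : ∀ z : EuclideanSpace ℝ (Fin d), ‖iteratedFDeriv ℝ 2 F z‖ ≤ L)
    (a b : EuclideanSpace ℝ (Fin d)) :
    ‖fderiv ℝ F a - fderiv ℝ F b‖ ≤ L * ‖a - b‖ := by
  have hdf : ContDiff ℝ 1 (fderiv ℝ F) := ((contDiff_succ_iff_fderiv.mp (show ContDiff ℝ (1+1) F from hF)).2.2 : _)
  have hbound : ∀ z, ‖fderiv ℝ (fderiv ℝ F) z‖ ≤ L := by
    intro z
    have h0 : ‖iteratedFDeriv ℝ 0 (fderiv ℝ (fderiv ℝ F)) z‖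
        = ‖iteratedFDeriv ℝ 1 (fderiv ℝ F) z‖ := norm_iteratedFDeriv_fderiv
    have h1 : ‖iteratedFDeriv ℝ 1 (fderiv ℝ F) z‖ = ‖iteratedFDeriv ℝ 2 F z‖ :=
      norm_iteratedFDeriv_fderiv
    have h2 : ‖iteratedFDeriv ℝ 0 (fderiv ℝ (fderiv ℝ F)) z‖
        = ‖fderiv ℝ (fderiv ℝ F) z‖ := norm_iteratedFDeriv_zero
    rw [← h2, h0, h1]; exact hL2 z
  have := (convex_univ : Convex ℝ (Set.univ : Set (EuclideanSpace ℝ (Fin d)))).norm_image_sub_le_of_norm_fderiv_le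
    (f := fderiv ℝ F) (fun z _ => (hdf.differentiable one_ne_zero).differentiableAt)
    (fun z _ => hbound z) (Set.mem_univ b) (Set.mem_univ a)
  simpa using this

/-- Key bound in the proof of Proposition 1 of the paper: if all decoys
`x̃¹, …, x̃ᵐ` of `x` lie within radius `r` of `x` and the Hessian of `F` is
uniformly bounded in operator norm by `L` (so the gradient of `F` is
`L`-Lipschitz), then the decoy-enhanced saliency score of each feature `i`—the
range of the vanilla gradient saliency scores over the decoys—is nonnegative
and at most `2·L·r`. -/
theorem decoy_saliency_range_bound
    (d : ℕ) (hd : 0 < d)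
    (F : EuclideanSpace ℝ (Fin d) → ℝ) (L : ℝ) (hL : 0 ≤ L)
    (hF : ContDiff ℝ 2 F)
    (hL2 : ∀ z : EuclideanSpace ℝ (Fin d), ‖iteratedFDeriv ℝ 2 F z‖ ≤ L)
    (x : EuclideanSpace ℝ (Fin d)) (r : ℝ)
    (m : ℕ) (hm : 0 < m)
    (xt : Fin m → EuclideanSpace ℝ (Fin d))
    (hxt : ∀ j : Fin m, ‖xt j - x‖ ≤ r)
    (i : Fin d) (Z : ℝ)
    (hZ : Z =
      Finset.univ.sup' ⟨⟨0, hm⟩, Finset.mem_univ _⟩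
        (fun j => fderiv ℝ F (xt j) (EuclideanSpace.single i 1))
      - Finset.univ.inf' ⟨⟨0, hm⟩, Finset.mem_univ _⟩
        (fun j => fderiv ℝ F (xt j) (EuclideanSpace.single i 1))) :
    0 ≤ Z ∧ Z ≤ 2 * L * r := by
  set g : Fin m → ℝ := fun j => fderiv ℝ F (xt j) (EuclideanSpace.single i 1) with hg
  have hne : (Finset.univ : Finset (Fin m)).Nonempty := ⟨⟨0, hm⟩, Finset.mem_univ _⟩
  obtain ⟨j, _, hj⟩ := Finset.exists_mem_eq_sup' hne g
  obtain ⟨k, _, hk⟩ := Finset.exists_mem_eq_inf' hne g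
  constructor
  · rw [hZ]
    have := (Finset.inf'_le g (Finset.mem_univ ⟨0, hm⟩)).trans (Finset.le_sup' g (Finset.mem_univ ⟨0, hm⟩))
    linarith
  · rw [hZ, hj, hk]
    have hnorm : ‖EuclideanSpace.single i (1:ℝ)‖ = 1 := by
      rw [EuclideanSpace.norm_single]; norm_num
    have h1 : g j - g k ≤ ‖fderiv ℝ F (xt j) - fderiv ℝ F (xt k)‖ := by
      have := (fderiv ℝ F (xt j) - fderiv ℝ F (xt k)).le_opNorm (EuclideanSpace.single i 1)
      rw [hnorm, mul_one] at this
      simp only [ContinuousLinearMap.sub_apply] at this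
      calc g j - g k ≤ |g j - g k| := le_abs_self _
        _ = ‖fderiv ℝ F (xt j) (EuclideanSpace.single i 1)
              - fderiv ℝ F (xt k) (EuclideanSpace.single i 1)‖ := rfl
        _ ≤ _ := this
    have h2 : ‖fderiv ℝ F (xt j) - fderiv ℝ F (xt k)‖ ≤ L * ‖xt j - xt k‖ :=
      fderiv_lip d F L hF hL2 _ _
    have h3 : ‖xt j - xt k‖ ≤ 2 * r := by
      calc ‖xt j - xt k‖ = ‖(xt j - x) + (x - xt k)‖ := by abel_nf
        _ ≤ ‖xt j - x‖ + ‖x - xt k‖ := norm_add_le _ _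
        _ ≤ r + r := by
            have := hxt k; rw [norm_sub_rev] at this
            exact add_le_add (hxt j) this
        _ = 2 * r := by ring
    calc g j - g k ≤ L * ‖xt j - xt k‖ := h1.trans h2
      _ ≤ L * (2 * r) := by exact mul_le_mul_of_nonneg_left h3 hL
      _ = 2 * L * r := by ring
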